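/- Under the hypotheses that p(a,b|x,x') = tr(ρ(E^x_a ⊗ F^{x'}_b)) is a synchronous quantum correlation with tr_A(ρ), tr_B(ρ) of full rank, each E^x_y commutes with tr_B(ρ) and each F^x_y commutes with tr_A(ρ). -/

import Mathlib

open Matrix Kronecker
open scoped ComplexOrder

/-- partial trace over the first factor: `tr_A ρ` acts on `H_B`. -/
noncomputable def ptraceA {dA dB : ℕ} (ρ : Matrix (Fin dA × Fin dB) (Fin dA × Fin dB) ℂ) :
    Matrix (Fin dB) (Fin dB) ℂ :=
  fun i j => ∑ k : Fin dA, ρ (k, i) (k, j)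

/-- partial trace over the second factor: `tr_B ρ` acts on `H_A`. -/
noncomputable def ptraceB {dA dB : ℕ} (ρ : Matrix (Fin dA × Fin dB) (Fin dA × Fin dB) ℂ) :
    Matrix (Fin dA) (Fin dA) ℂ :=
  fun i j => ∑ k : Fin dB, ρ (i, k) (j, k)

section helpers

open scoped MatrixOrder

lemma trace_conjT_mul_self_zero {n : Type*} [Fintype n] {m : Type*} [Fintype m]
    (A : Matrix m n ℂ) (h : (Aᴴ * A).trace = 0) : A = 0 := by
  have h' : ∑ j : n, ∑ i : m, (Complex.normSq (A i j) : ℂ) = 0 := by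
    rw [← h]
    simp only [Matrix.trace, Matrix.diag, Matrix.mul_apply, Matrix.conjTranspose_apply]
    congr 1; ext j; congr 1; ext i
    rw [Complex.normSq_eq_conj_mul_self]
    rfl
  have h'' : ∑ j : n, ∑ i : m, Complex.normSq (A i j) = 0 := by
    have := h'
    push_cast at this
    exact_mod_cast this
  ext i j
  have hnn : ∀ j ∈ Finset.univ, (0:ℝ) ≤ ∑ i : m, Complex.normSq (A i j) :=
    fun j _ => Finset.sum_nonneg fun i _ => Complex.normSq_nonneg _
  have h1 := (Finset.sum_eq_zero_iff_of_nonneg hnn).1 h'' j (Finset.mem_univ j)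
  have h2 := (Finset.sum_eq_zero_iff_of_nonneg
    (fun i _ => Complex.normSq_nonneg (A i j))).1 h1 i (Finset.mem_univ i)
  simpa using Complex.normSq_eq_zero.1 h2

lemma psd_mul_eq_zero {n : Type*} [Fintype n] [DecidableEq n] {ρ M : Matrix n n ℂ}
    (hρ : ρ.PosSemidef) (hM : M.PosSemidef) (h : (ρ * M).trace = 0) :
    ρ * M = 0 ∧ M * ρ = 0 := by
  set s := CFC.sqrt ρ with hs
  set m := CFC.sqrt M with hm
  have hsH : sᴴ = s := (CFC.sqrt_nonneg ρ).posSemidef.isHermitian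
  have hmH : mᴴ = m := (CFC.sqrt_nonneg M).posSemidef.isHermitian
  have hss : s * s = ρ := CFC.sqrt_mul_sqrt_self ρ hρ.nonneg
  have hmm' : m * m = M := CFC.sqrt_mul_sqrt_self M hM.nonneg
  have hms : m * s = 0 := by
    apply trace_conjT_mul_self_zero
    have e1 : (m * s)ᴴ * (m * s) = s * (M * s) := by
      rw [conjTranspose_mul, hsH, hmH, mul_assoc, ← mul_assoc m m s, hmm']
    rw [e1, trace_mul_comm, mul_assoc, hss, trace_mul_comm, h]
  have hsm : s * m = 0 := by
    have := congrArg conjTranspose hms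
    simpa [conjTranspose_mul, hsH, hmH] using this
  constructor
  · rw [← hss, ← hmm', mul_assoc, ← mul_assoc s m m, hsm,
      zero_mul, mul_zero]
  · rw [← hss, ← hmm', mul_assoc, ← mul_assoc m s s, hms,
      zero_mul, mul_zero]

lemma kron_psd {a b : Type*} [Fintype a] [Fintype b] [DecidableEq a] [DecidableEq b]
    {A : Matrix a a ℂ} {B : Matrix b b ℂ} (hA : A.PosSemidef) (hB : B.PosSemidef) :
    (A ⊗ₖ B).PosSemidef := by
  have hck : (CFC.sqrt A ⊗ₖ CFC.sqrt B)ᴴ = CFC.sqrt A ⊗ₖ CFC.sqrt B := by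
    ext ⟨i, k⟩ ⟨j, l⟩
    simp only [conjTranspose_apply, kroneckerMap_apply, star_mul']
    rw [← conjTranspose_apply, ← conjTranspose_apply, (CFC.sqrt_nonneg A).posSemidef.isHermitian,
      (CFC.sqrt_nonneg B).posSemidef.isHermitian, mul_comm]
  have e : A ⊗ₖ B = (CFC.sqrt A ⊗ₖ CFC.sqrt B)ᴴ * (CFC.sqrt A ⊗ₖ CFC.sqrt B) := by
    rw [hck, ← Matrix.mul_kronecker_mul, CFC.sqrt_mul_sqrt_self A hA.nonneg, CFC.sqrt_mul_sqrt_self B hB.nonneg]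
  rw [e]
  exact Matrix.posSemidef_conjTranspose_mul_self _

variable {dA dB : ℕ} (ρ : Matrix (Fin dA × Fin dB) (Fin dA × Fin dB) ℂ)
  (A : Matrix (Fin dA) (Fin dA) ℂ) (B : Matrix (Fin dB) (Fin dB) ℂ)

lemma ptraceB_kone_mul :
    ptraceB ((A ⊗ₖ (1 : Matrix (Fin dB) (Fin dB) ℂ)) * ρ) = A * ptraceB ρ := by
  ext i j
  simp only [ptraceB, Matrix.mul_apply, kroneckerMap_apply, Fintype.sum_prod_type,
    Matrix.one_apply, mul_ite, mul_one, mul_zero, ite_mul, zero_mul, one_mul,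
    Finset.sum_ite_eq, Finset.sum_ite_eq', Finset.mem_univ, if_true, Finset.mul_sum]
  exact Finset.sum_comm

lemma ptraceB_mul_kone :
    ptraceB (ρ * (A ⊗ₖ (1 : Matrix (Fin dB) (Fin dB) ℂ))) = ptraceB ρ * A := by
  ext i j
  simp only [ptraceB, Matrix.mul_apply, kroneckerMap_apply, Fintype.sum_prod_type,
    Matrix.one_apply, mul_ite, mul_one, mul_zero, ite_mul, zero_mul, one_mul,
    Finset.sum_ite_eq, Finset.sum_ite_eq', Finset.mem_univ, if_true, Finset.sum_mul]
  exact Finset.sum_comm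

lemma ptraceB_onek_comm :
    ptraceB (((1 : Matrix (Fin dA) (Fin dA) ℂ) ⊗ₖ B) * ρ) =
      ptraceB (ρ * ((1 : Matrix (Fin dA) (Fin dA) ℂ) ⊗ₖ B)) := by
  ext i j
  simp only [ptraceB, Matrix.mul_apply, kroneckerMap_apply, Fintype.sum_prod_type,
    Matrix.one_apply, mul_ite, mul_one, mul_zero, ite_mul, zero_mul, one_mul]
  have hswapL : ∀ k : Fin dB,
      (∑ x1 : Fin dA, ∑ x2 : Fin dB, if i = x1 then B k x2 * ρ (x1, x2) (j, k) else 0) =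
      ∑ x2 : Fin dB, ∑ x1 : Fin dA, if i = x1 then B k x2 * ρ (x1, x2) (j, k) else 0 :=
    fun k => Finset.sum_comm
  have hswapR : ∀ k : Fin dB,
      (∑ x1 : Fin dA, ∑ x2 : Fin dB, if x1 = j then ρ (i, k) (x1, x2) * B x2 k else 0) =
      ∑ x2 : Fin dB, ∑ x1 : Fin dA, if x1 = j then ρ (i, k) (x1, x2) * B x2 k else 0 :=
    fun k => Finset.sum_comm
  simp only [hswapL, hswapR, Finset.sum_ite_eq, Finset.sum_ite_eq', Finset.mem_univ, if_true]
  rw [Finset.sum_comm]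
  exact Finset.sum_congr rfl fun a _ => Finset.sum_congr rfl fun b _ => by ring

lemma ptraceA_onek_mul :
    ptraceA (((1 : Matrix (Fin dA) (Fin dA) ℂ) ⊗ₖ B) * ρ) = B * ptraceA ρ := by
  ext i j
  simp only [ptraceA, Matrix.mul_apply, kroneckerMap_apply, Fintype.sum_prod_type,
    Matrix.one_apply, mul_ite, mul_one, mul_zero, ite_mul, zero_mul, one_mul,
    Finset.mul_sum]
  have hswap : ∀ k : Fin dA,
      (∑ x1 : Fin dA, ∑ x2 : Fin dB, if k = x1 then B i x2 * ρ (x1, x2) (k, j) else 0) =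
      ∑ x2 : Fin dB, ∑ x1 : Fin dA, if k = x1 then B i x2 * ρ (x1, x2) (k, j) else 0 :=
    fun k => Finset.sum_comm
  simp only [hswap, Finset.sum_ite_eq, Finset.mem_univ, if_true]
  exact Finset.sum_comm

lemma ptraceA_mul_onek :
    ptraceA (ρ * ((1 : Matrix (Fin dA) (Fin dA) ℂ) ⊗ₖ B)) = ptraceA ρ * B := by
  ext i j
  simp only [ptraceA, Matrix.mul_apply, kroneckerMap_apply, Fintype.sum_prod_type,
    Matrix.one_apply, mul_ite, mul_one, mul_zero, ite_mul, zero_mul, one_mul,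
    Finset.sum_mul]
  have hswap : ∀ k : Fin dA,
      (∑ x1 : Fin dA, ∑ x2 : Fin dB, if x1 = k then ρ (k, i) (x1, x2) * B x2 j else 0) =
      ∑ x2 : Fin dB, ∑ x1 : Fin dA, if x1 = k then ρ (k, i) (x1, x2) * B x2 j else 0 :=
    fun k => Finset.sum_comm
  simp only [hswap, Finset.sum_ite_eq', Finset.mem_univ, if_true]
  exact Finset.sum_comm

lemma ptraceA_kone_comm :
    ptraceA ((A ⊗ₖ (1 : Matrix (Fin dB) (Fin dB) ℂ)) * ρ) =
      ptraceA (ρ * (A ⊗ₖ (1 : Matrix (Fin dB) (Fin dB) ℂ))) := by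
  ext i j
  simp only [ptraceA, Matrix.mul_apply, kroneckerMap_apply, Fintype.sum_prod_type,
    Matrix.one_apply, mul_ite, mul_one, mul_zero, ite_mul, zero_mul, one_mul,
    Finset.sum_ite_eq, Finset.sum_ite_eq', Finset.mem_univ, if_true]
  rw [Finset.sum_comm]
  exact Finset.sum_congr rfl fun a _ => Finset.sum_congr rfl fun b _ => by ring

end helpers

theorem stmt_5
    {X Y : Type} [Fintype X] [Fintype Y] [Nonempty X] [Nonempty Y]
    {dA dB : ℕ}
    (ρ : Matrix (Fin dA × Fin dB) (Fin dA × Fin dB) ℂ)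
    (hρpsd : ρ.PosSemidef) (hρtr : ρ.trace = 1)
    (hfullA : (ptraceA ρ).det ≠ 0) (hfullB : (ptraceB ρ).det ≠ 0)
    (E : X → Y → Matrix (Fin dA) (Fin dA) ℂ)
    (F : X → Y → Matrix (Fin dB) (Fin dB) ℂ)
    (hE : ∀ x y, (E x y).PosSemidef) (hF : ∀ x y, (F x y).PosSemidef)
    (hE1 : ∀ x, ∑ y, E x y = 1) (hF1 : ∀ x, ∑ y, F x y = 1)
    (hsync : ∀ x a b, a ≠ b → (ρ * (E x a ⊗ₖ F x b)).trace = 0) :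
    ∀ x y, E x y * ptraceB ρ = ptraceB ρ * E x y ∧ F x y * ptraceA ρ = ptraceA ρ * F x y := by
  intro x y
  have key : ∀ a b : Y, a ≠ b →
      ρ * (E x a ⊗ₖ F x b) = 0 ∧ (E x a ⊗ₖ F x b) * ρ = 0 :=
    fun a b hab => psd_mul_eq_zero hρpsd (kron_psd (hE x a) (hF x b)) (hsync x a b hab)
  -- expand the kronecker of a sum
  have kron_sumF : (E x y ⊗ₖ (1 : Matrix (Fin dB) (Fin dB) ℂ)) = ∑ b, E x y ⊗ₖ F x b := by
    rw [← hF1 x]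
    ext ⟨i, k⟩ ⟨j, l⟩
    simp [kroneckerMap_apply, Finset.mul_sum, Matrix.sum_apply]
  have kron_sumE : ((1 : Matrix (Fin dA) (Fin dA) ℂ) ⊗ₖ F x y) = ∑ a, E x a ⊗ₖ F x y := by
    rw [← hE1 x]
    ext ⟨i, k⟩ ⟨j, l⟩
    simp [kroneckerMap_apply, Finset.sum_mul, Matrix.sum_apply]
  have right1 : ρ * (E x y ⊗ₖ (1 : Matrix (Fin dB) (Fin dB) ℂ)) = ρ * (E x y ⊗ₖ F x y) := by
    rw [kron_sumF, Finset.mul_sum, Finset.sum_eq_single y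
      (fun b _ hb => (key y b (Ne.symm hb)).1) (by simp)]
  have right2 : ρ * ((1 : Matrix (Fin dA) (Fin dA) ℂ) ⊗ₖ F x y) = ρ * (E x y ⊗ₖ F x y) := by
    rw [kron_sumE, Finset.mul_sum, Finset.sum_eq_single y
      (fun a _ ha => (key a y ha).1) (by simp)]
  have left1 : (E x y ⊗ₖ (1 : Matrix (Fin dB) (Fin dB) ℂ)) * ρ = (E x y ⊗ₖ F x y) * ρ := by
    rw [kron_sumF, Finset.sum_mul, Finset.sum_eq_single y
      (fun b _ hb => (key y b (Ne.symm hb)).2) (by simp)]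
  have left2 : ((1 : Matrix (Fin dA) (Fin dA) ℂ) ⊗ₖ F x y) * ρ = (E x y ⊗ₖ F x y) * ρ := by
    rw [kron_sumE, Finset.sum_mul, Finset.sum_eq_single y
      (fun a _ ha => (key a y ha).2) (by simp)]
  constructor
  · calc E x y * ptraceB ρ
        = ptraceB ((E x y ⊗ₖ (1 : Matrix (Fin dB) (Fin dB) ℂ)) * ρ) :=
          (ptraceB_kone_mul ρ (E x y)).symm
      _ = ptraceB (((1 : Matrix (Fin dA) (Fin dA) ℂ) ⊗ₖ F x y) * ρ) := by
          rw [left1, left2]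
      _ = ptraceB (ρ * ((1 : Matrix (Fin dA) (Fin dA) ℂ) ⊗ₖ F x y)) :=
          ptraceB_onek_comm ρ (F x y)
      _ = ptraceB (ρ * (E x y ⊗ₖ (1 : Matrix (Fin dB) (Fin dB) ℂ))) := by
          rw [right2, right1]
      _ = ptraceB ρ * E x y := ptraceB_mul_kone ρ (E x y)
  · calc F x y * ptraceA ρ
        = ptraceA (((1 : Matrix (Fin dA) (Fin dA) ℂ) ⊗ₖ F x y) * ρ) :=
          (ptraceA_onek_mul ρ (F x y)).symm
      _ = ptraceA ((E x y ⊗ₖ (1 : Matrix (Fin dB) (Fin dB) ℂ)) * ρ) := by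
          rw [left2, left1]
      _ = ptraceA (ρ * (E x y ⊗ₖ (1 : Matrix (Fin dB) (Fin dB) ℂ))) :=
          ptraceA_kone_comm ρ (E x y)
      _ = ptraceA (ρ * ((1 : Matrix (Fin dA) (Fin dA) ℂ) ⊗ₖ F x y)) := by
          rw [right1, right2]
      _ = ptraceA ρ * F x y := ptraceA_mul_onek ρ (F x y)
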